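/- Let 1 < b < n be integers with b dividing n, and let M ∈ MM*(b,n) over 𝔽 ∈ {ℝ, ℂ}. Then there exist matrices L₁, L₂ ∈ BD(n/b, n) and R ∈ BD(b, n) such that M = (Pᵀ L₁ P) · R · (Pᵀ L₂ P), where P = P_{(b,n)}. -/
import Mathlib

open Matrix

/-- `BD b n R`: `R` is block-diagonal with `n/b` diagonal blocks of size `b × b`. -/
def BD {𝔽 : Type*} [RCLike 𝔽] (b n : ℕ) (R : Matrix (Fin n) (Fin n) 𝔽) : Prop :=
  ∀ i j : Fin n, i.val / b ≠ j.val / b → R i j = 0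

/-- `DB b n L`: `L[i,j] = 0` whenever `i ≢ j (mod b)`. -/
def DB {𝔽 : Type*} [RCLike 𝔽] (b n : ℕ) (L : Matrix (Fin n) (Fin n) 𝔽) : Prop :=
  ∀ i j : Fin n, i.val % b ≠ j.val % b → L i j = 0

/-- The permutation matrix `P_{(b,n)}`. -/
def permMat (𝔽 : Type*) [RCLike 𝔽] (b n : ℕ) : Matrix (Fin n) (Fin n) 𝔽 :=
  Matrix.of fun i j => if i.val = j.val % b * (n / b) + j.val / b then 1 else 0

/-- The Monarch class `M(b,n) = { L·R : L ∈ DB(b,n), R ∈ BD(b,n) }`. -/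
def MonarchClass {𝔽 : Type*} [RCLike 𝔽] (b n : ℕ) (M : Matrix (Fin n) (Fin n) 𝔽) : Prop :=
  ∃ L R : Matrix (Fin n) (Fin n) 𝔽, DB b n L ∧ BD b n R ∧ M = L * R

/-- `MM*(b,n) = { M₁·M₂* : M₁, M₂ ∈ M(b,n) }`. -/
def MMstar {𝔽 : Type*} [RCLike 𝔽] (b n : ℕ) (M : Matrix (Fin n) (Fin n) 𝔽) : Prop :=
  ∃ M₁ M₂ : Matrix (Fin n) (Fin n) 𝔽,
    MonarchClass b n M₁ ∧ MonarchClass b n M₂ ∧ M = M₁ * M₂ᴴ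

section Aux

variable {𝔽 : Type*} [RCLike 𝔽]

lemma BD_mul {b n : ℕ} {A B : Matrix (Fin n) (Fin n) 𝔽} (hA : BD b n A) (hB : BD b n B) :
    BD b n (A * B) := by
  intro i j h
  rw [Matrix.mul_apply]
  apply Finset.sum_eq_zero
  intro k _
  by_cases hk : i.val / b = k.val / b
  · rw [hB k j (hk ▸ h), mul_zero]
  · rw [hA i k hk, zero_mul]

lemma BD_conjTranspose {b n : ℕ} {A : Matrix (Fin n) (Fin n) 𝔽} (hA : BD b n A) :
    BD b n Aᴴ := fun i j h => by
  rw [Matrix.conjTranspose_apply, hA j i (Ne.symm h), star_zero]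

lemma DB_conjTranspose {b n : ℕ} {A : Matrix (Fin n) (Fin n) 𝔽} (hA : DB b n A) :
    DB b n Aᴴ := fun i j h => by
  rw [Matrix.conjTranspose_apply, hA j i (Ne.symm h), star_zero]

lemma blk_lt {b m x : ℕ} (hb : 0 < b) (hm : 0 < m) (hx : x < b * m) :
    x % b * m + x / b < b * m := by
  have h1 : x % b < b := Nat.mod_lt _ hb
  have h2 : x / b < m := (Nat.div_lt_iff_lt_mul hb).mpr (by rwa [mul_comm] at hx)
  calc x % b * m + x / b < x % b * m + m := by omega
    _ = (x % b + 1) * m := by ring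
    _ ≤ b * m := Nat.mul_le_mul_right _ (by omega)

lemma mod_div_of {m : ℕ} (hm0 : 0 < m) (r q : ℕ) (hq : q < m) :
    (r * m + q) % m = q ∧ (r * m + q) / m = r := by
  constructor
  · rw [Nat.add_comm, Nat.add_mul_mod_self_right, Nat.mod_eq_of_lt hq]
  · rw [Nat.add_comm, Nat.add_mul_div_right _ _ hm0, Nat.div_eq_of_lt hq, Nat.zero_add]

end Aux

/-- every `M ∈ MM*(b,n)` can be written as
`(Pᵀ L₁ P) · R · (Pᵀ L₂ P)` with `L₁, L₂ ∈ BD(n/b, n)` and `R ∈ BD(b,n)`. -/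
theorem mmstar_decomposition {𝔽 : Type*} [RCLike 𝔽] (b n : ℕ)
    (hb : 1 < b) (hbn : b < n) (hdvd : b ∣ n)
    (M : Matrix (Fin n) (Fin n) 𝔽) (hM : MMstar b n M) :
    ∃ L₁ L₂ R : Matrix (Fin n) (Fin n) 𝔽,
      BD (n / b) n L₁ ∧ BD (n / b) n L₂ ∧ BD b n R ∧
      M = ((permMat 𝔽 b n)ᵀ * L₁ * permMat 𝔽 b n) * R *
          ((permMat 𝔽 b n)ᵀ * L₂ * permMat 𝔽 b n) := by
  obtain ⟨M₁, M₂, ⟨A₁, R₁, hA₁, hR₁, rfl⟩, ⟨A₂, R₂, hA₂, hR₂, rfl⟩, rfl⟩ := hM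
  have hb0 : 0 < b := by omega
  set m := n / b with hm_def
  have hm0 : 0 < m := Nat.div_pos (le_of_lt hbn) hb0
  have hnbm : n = b * m := (Nat.mul_div_cancel' hdvd).symm
  have hbound1 : ∀ x : ℕ, x < n → x % b * m + x / b < n := by
    intro x hx
    rw [hnbm] at hx ⊢
    exact blk_lt hb0 hm0 hx
  have hbound2 : ∀ x : ℕ, x < n → x % m * b + x / m < n := by
    intro x hx
    rw [hnbm, mul_comm b m] at hx ⊢
    exact blk_lt hm0 hb0 hx
  have hdivlt : ∀ j : Fin n, j.val / b < m := fun j =>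
    (Nat.div_lt_iff_lt_mul hb0).mpr (by rw [mul_comm, ← hnbm]; exact j.2)
  have hdivlt' : ∀ i : Fin n, i.val / m < b := fun i =>
    (Nat.div_lt_iff_lt_mul hm0).mpr (by rw [← hnbm]; exact i.2)
  set σ : Fin n → Fin n := fun j => ⟨j.val % b * m + j.val / b, hbound1 _ j.2⟩ with hσ_def
  set τ : Fin n → Fin n := fun i => ⟨i.val % m * b + i.val / m, hbound2 _ i.2⟩ with hτ_def
  have hσval : ∀ j : Fin n, ((σ j : Fin n) : ℕ) % m = j.val / b ∧
      ((σ j : Fin n) : ℕ) / m = j.val % b := fun j => mod_div_of hm0 _ _ (hdivlt j)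
  have hτval : ∀ i : Fin n, ((τ i : Fin n) : ℕ) % b = i.val / m ∧
      ((τ i : Fin n) : ℕ) / b = i.val % m := fun i => mod_div_of hb0 _ _ (hdivlt' i)
  have hτσ : ∀ j, τ (σ j) = j := by
    intro j
    apply Fin.ext
    show ((σ j : Fin n) : ℕ) % m * b + ((σ j : Fin n) : ℕ) / m = j.val
    rw [(hσval j).1, (hσval j).2]
    all_goals exact Nat.div_add_mod' j.val b
  have hστ : ∀ i, σ (τ i) = i := by
    intro i
    apply Fin.ext
    show ((τ i : Fin n) : ℕ) % b * m + ((τ i : Fin n) : ℕ) / b = i.val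
    rw [(hτval i).1, (hτval i).2]
    all_goals exact Nat.div_add_mod' i.val m
  have hiff : ∀ i k : Fin n, (i = σ k) ↔ (k = τ i) := by
    intro i k
    constructor
    · rintro rfl; exact (hτσ k).symm
    · rintro rfl; exact (hστ i).symm
  set P : Matrix (Fin n) (Fin n) 𝔽 := permMat 𝔽 b n with hP_def
  have hP : ∀ i j : Fin n, P i j = if i = σ j then 1 else 0 := by
    intro i j
    show (if i.val = j.val % b * (n / b) + j.val / b then (1:𝔽) else 0) = _
    rw [← hm_def]
    congr 1
    rw [Fin.ext_iff]
  -- conjugation formula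
  have hconj : ∀ (L : Matrix (Fin n) (Fin n) 𝔽) (i j : Fin n),
      (P * L * Pᵀ) i j = L (τ i) (τ j) := by
    intro L i j
    simp only [Matrix.mul_apply, Matrix.transpose_apply, hP, hiff, ite_mul, one_mul,
      zero_mul, mul_ite, mul_one, mul_zero, Finset.sum_ite_eq', Finset.mem_univ, if_true]
  have hPtP : Pᵀ * P = 1 := by
    ext i j
    simp only [Matrix.mul_apply, Matrix.transpose_apply, hP, ite_mul, one_mul,
      zero_mul, mul_ite, mul_one, mul_zero, Finset.sum_ite_eq', Finset.mem_univ, if_true]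
    rw [Matrix.one_apply]
    by_cases h : i = j
    · subst h; simp
    · rw [if_neg h, if_neg]
      intro hc
      have h2 : j = i := by have := congrArg τ hc; rwa [hτσ, hτσ] at this
      exact h h2.symm
  have hunconj : ∀ (L : Matrix (Fin n) (Fin n) 𝔽), Pᵀ * (P * L * Pᵀ) * P = L := by
    intro L
    calc Pᵀ * (P * L * Pᵀ) * P = (Pᵀ * P) * L * (Pᵀ * P) := by
          simp only [Matrix.mul_assoc]
      _ = L := by rw [hPtP, Matrix.one_mul, Matrix.mul_one]
  have hDBtoBD : ∀ (L : Matrix (Fin n) (Fin n) 𝔽), DB b n L → BD m n (P * L * Pᵀ) := by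
    intro L hL i j hij
    rw [hconj]
    apply hL
    rw [(hτval i).1, (hτval j).1]
    exact hij
  refine ⟨P * A₁ * Pᵀ, P * A₂ᴴ * Pᵀ, R₁ * R₂ᴴ,
    hDBtoBD _ hA₁, hDBtoBD _ (DB_conjTranspose hA₂),
    BD_mul hR₁ (BD_conjTranspose hR₂), ?_⟩
  rw [hunconj, hunconj, Matrix.conjTranspose_mul]
  simp only [Matrix.mul_assoc]
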